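/- arXiv:2508.12452 — 3 statements merged into one kernel-verified Lean document; each statement's English description precedes it below -/
import Mathlib

section
/- Let μ_1, ν_1, μ_2, ν_2 ∈ M_P with μ_1 equivalent to μ_2 and ν_1 equivalent to ν_2, and suppose limsup_{l→∞} μ_i([−l,l])/ν_i([−l,l]) < ∞. Then O^p(ℝ, X, μ_1, ν_1) = O^p(ℝ, X, μ_2, ν_2). -/
open MeasureTheory Filter Topology
open scoped ENNReal NNReal

/-- The averaged `p`-integral over the window `[θ, θ+h]`. -/
noncomputable def weylAvg {X : Type*} [NormedAddCommGroup X] (p : ℝ) (u : ℝ → X)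
    (h θ : ℝ) : ℝ≥0∞ :=
  ((ENNReal.ofReal h)⁻¹ * ∫⁻ s in Set.Ioc θ (θ + h), (‖u s‖₊ : ℝ≥0∞) ^ p) ^ (1 / p)

/-- The Weyl seminorm `‖u‖_{W^p} = lim_{h→∞} sup_θ ((1/h)∫_θ^{θ+h} ‖u‖^p)^{1/p}`. -/
noncomputable def weylNorm {X : Type*} [NormedAddCommGroup X] (p : ℝ) (u : ℝ → X) : ℝ≥0∞ :=
  Filter.limsup (fun h => ⨆ θ : ℝ, weylAvg p u h θ) Filter.atTop

/-- `W^p`-bounded functions: locally `p`-integrable (here: measurable) with finite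
Weyl seminorm. -/
def WpB {X : Type*} [NormedAddCommGroup X] (p : ℝ) (u : ℝ → X) : Prop :=
  AEStronglyMeasurable u volume ∧ weylNorm p u < ⊤

/-- `p`-th Weyl almost automorphic functions. -/
def WpAA {X : Type*} [NormedAddCommGroup X] (p : ℝ) (u : ℝ → X) : Prop :=
  WpB p u ∧ ∀ γ' : ℕ → ℝ, ∃ (φ : ℕ → ℕ) (v : ℝ → X), StrictMono φ ∧
    Tendsto (fun n => weylNorm p (fun t => u (t + γ' (φ n)) - v t)) atTop (𝓝 0) ∧
    Tendsto (fun n => weylNorm p (fun t => v (t - γ' (φ n)) - u t)) atTop (𝓝 0)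

/-- The class `M_P`: positive measures on `ℝ` with infinite total mass which are
finite on compact intervals. -/
def MemMP (μ : Measure ℝ) : Prop :=
  μ Set.univ = ⊤ ∧ ∀ a b : ℝ, μ (Set.Icc a b) < ⊤

/-- The local Weyl quantity `lim_{h→∞} ((1/h)∫_θ^{θ+h} ‖u‖^p)^{1/p}`. -/
noncomputable def weylLocal {X : Type*} [NormedAddCommGroup X] (p : ℝ) (u : ℝ → X)
    (θ : ℝ) : ℝ≥0∞ :=
  Filter.limsup (fun h => weylAvg p u h θ) Filter.atTop

/-- Membership in the ergodic space `O^p(ℝ, X, μ, ν)`. -/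
def MemO {X : Type*} [NormedAddCommGroup X] (p : ℝ) (μ ν : Measure ℝ) (u : ℝ → X) : Prop :=
  WpB p u ∧
    Tendsto (fun l : ℝ =>
        (ν (Set.Icc (-l) l))⁻¹ * ∫⁻ θ in Set.Icc (-l) l, weylLocal p u θ ∂μ)
      atTop (𝓝 0)

/-- Condition `(B₁)`: `limsup_{l→∞} μ([−l,l])/ν([−l,l]) < ∞`. -/
def CondB1 (μ ν : Measure ℝ) : Prop :=
  Filter.limsup (fun l : ℝ => μ (Set.Icc (-l) l) / ν (Set.Icc (-l) l)) atTop < ⊤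

/-- Equivalence of measures: `α ν(B) ≤ μ(B) ≤ β ν(B)` outside a bounded interval. -/
def EquivMeas (μ ν : Measure ℝ) : Prop :=
  ∃ (α β : ℝ≥0∞) (A : Set ℝ), 0 < α ∧ α < ⊤ ∧ 0 < β ∧ β < ⊤ ∧ Bornology.IsBounded A ∧
    ∀ B : Set ℝ, MeasurableSet B → B ∩ A = ∅ → α * ν B ≤ μ B ∧ μ B ≤ β * ν B

/-- Condition `(B₂)`: translates of sets away from a bounded interval have
comparable measure. -/
def CondB2 (μ : Measure ℝ) : Prop :=
  ∀ ω : ℝ, ∃ (ρ : ℝ≥0∞) (J : Set ℝ), 0 < ρ ∧ ρ < ⊤ ∧ Bornology.IsBounded J ∧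
    ∀ A : Set ℝ, MeasurableSet A → A ∩ J = ∅ →
      μ ((fun a => a + ω) '' A) ≤ ρ * μ A

/-- Membership in the ergodic space `E(ℝ, X, μ, ν)`. -/
def MemE {X : Type*} [NormedAddCommGroup X] (μ ν : Measure ℝ) (u : ℝ → X) : Prop :=
  Tendsto (fun l : ℝ =>
      (ν (Set.Icc (-l) l))⁻¹ * ∫⁻ t in Set.Icc (-l) l, (‖u t‖₊ : ℝ≥0∞) ∂μ)
    atTop (𝓝 0)


lemma aux_eventually_le_measure_Icc (ν : Measure ℝ) (hν : ν Set.univ = ⊤)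
    (C : ℝ≥0∞) (hC : C ≠ ⊤) :
    ∀ᶠ l : ℝ in atTop, C ≤ ν (Set.Icc (-l) l) := by
  have hU : (⋃ n : ℕ, Set.Icc (-(n : ℝ)) n) = Set.univ := by
    ext x
    simp only [Set.mem_iUnion, Set.mem_Icc, Set.mem_univ, iff_true]
    obtain ⟨n, hn⟩ := exists_nat_ge |x|
    exact ⟨n, abs_le.1 hn⟩
  have hdir : Directed (· ⊆ ·) (fun n : ℕ => Set.Icc (-(n : ℝ)) n) := by
    intro m n
    refine ⟨max m n, Set.Icc_subset_Icc ?_ ?_, Set.Icc_subset_Icc ?_ ?_⟩ <;>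
      simp [neg_le_neg_iff, Nat.cast_le, le_max_left, le_max_right]
  have hsup : (⨆ n : ℕ, ν (Set.Icc (-(n : ℝ)) n)) = ⊤ := by
    rw [← Directed.measure_iUnion hdir, hU, hν]
  obtain ⟨n, hn⟩ : ∃ n : ℕ, C < ν (Set.Icc (-(n : ℝ)) n) := by
    have : C < ⨆ n : ℕ, ν (Set.Icc (-(n : ℝ)) n) := hsup ▸ hC.lt_top
    exact lt_iSup_iff.1 this
  filter_upwards [eventually_ge_atTop (n : ℝ)] with l hl
  exact hn.le.trans (measure_mono (Set.Icc_subset_Icc (by linarith) hl))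

lemma aux_weylLocal_le_weylNorm {X : Type*} [NormedAddCommGroup X] (p : ℝ) (u : ℝ → X)
    (θ : ℝ) : weylLocal p u θ ≤ weylNorm p u :=
  limsup_le_limsup (Eventually.of_forall fun h => le_iSup (fun θ => weylAvg p u h θ) θ)

lemma aux_transfer {X : Type*} [NormedAddCommGroup X] (p : ℝ) (μ₁ ν₁ μ₂ ν₂ : Measure ℝ)
    (hν₁ : MemMP ν₁) (hν₂top : ν₂ Set.univ = ⊤)
    (c : ℝ≥0∞) (hc : c ≠ ⊤) (a b : ℝ)
    (hμc : ∀ B : Set ℝ, MeasurableSet B → B ∩ Set.Icc a b = ∅ → μ₂ B ≤ c * μ₁ B)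
    (hμ₂ab : μ₂ (Set.Icc a b) ≠ ⊤)
    (d : ℝ≥0∞) (hd0 : d ≠ 0) (hd' : d ≠ ⊤) (a' b' : ℝ)
    (hνd : ∀ B : Set ℝ, MeasurableSet B → B ∩ Set.Icc a' b' = ∅ → d * ν₁ B ≤ ν₂ B)
    (φ : ℝ → X) (hφ : weylNorm p φ ≠ ⊤)
    (h : Tendsto (fun l : ℝ =>
        (ν₁ (Set.Icc (-l) l))⁻¹ * ∫⁻ θ in Set.Icc (-l) l, weylLocal p φ θ ∂μ₁)
      atTop (𝓝 0)) :
    Tendsto (fun l : ℝ =>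
        (ν₂ (Set.Icc (-l) l))⁻¹ * ∫⁻ θ in Set.Icc (-l) l, weylLocal p φ θ ∂μ₂)
      atTop (𝓝 0) := by
  set g : ℝ → ℝ≥0∞ := weylLocal p φ with hg
  set M : ℝ≥0∞ := weylNorm p φ with hM
  set S : Set ℝ := Set.Icc a b
  set S' : Set ℝ := Set.Icc a' b'
  set C : ℝ≥0∞ := M * μ₂ S with hCdef
  have hC : C ≠ ⊤ := ENNReal.mul_ne_top hφ hμ₂ab
  -- numerator estimate, valid for all l
  have hnum : ∀ l : ℝ, (∫⁻ θ in Set.Icc (-l) l, g θ ∂μ₂) ≤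
      c * (∫⁻ θ in Set.Icc (-l) l, g θ ∂μ₁) + C := by
    intro l
    set I : Set ℝ := Set.Icc (-l) l
    have h1 : (∫⁻ θ in I, g θ ∂μ₂) ≤
        (∫⁻ θ in I ∩ Sᶜ, g θ ∂μ₂) + ∫⁻ θ in S, g θ ∂μ₂ := by
      refine le_trans (lintegral_mono_set (fun x hx => ?_)) (lintegral_union_le _ _ _)
      by_cases hxS : x ∈ S
      · exact Set.mem_union_right _ hxS
      · exact Set.mem_union_left _ ⟨hx, hxS⟩
    have h2 : (∫⁻ θ in I ∩ Sᶜ, g θ ∂μ₂) ≤ c * ∫⁻ θ in I, g θ ∂μ₁ := by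
      have hle : μ₂.restrict (I ∩ Sᶜ) ≤ (c • μ₁).restrict (I ∩ Sᶜ) := by
        refine Measure.le_iff.2 fun B hB => ?_
        have hmB : MeasurableSet (I ∩ Sᶜ) :=
          (measurableSet_Icc).inter measurableSet_Icc.compl
        rw [Measure.restrict_apply hB, Measure.restrict_apply hB]
        have hdisj : (B ∩ (I ∩ Sᶜ)) ∩ S = ∅ := by
          ext x; simp only [Set.mem_inter_iff, Set.mem_compl_iff, Set.mem_empty_iff_false,
            iff_false]
          tauto
        have := hμc _ (hB.inter hmB) hdisj
        simpa [Measure.smul_apply] using this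
      calc (∫⁻ θ in I ∩ Sᶜ, g θ ∂μ₂) ≤ ∫⁻ θ in I ∩ Sᶜ, g θ ∂(c • μ₁) :=
            lintegral_mono' hle le_rfl
        _ = c * ∫⁻ θ in I ∩ Sᶜ, g θ ∂μ₁ := by
            rw [Measure.restrict_smul, lintegral_smul_measure, smul_eq_mul]
        _ ≤ c * ∫⁻ θ in I, g θ ∂μ₁ :=
            mul_le_mul_right (lintegral_mono_set Set.inter_subset_left) _
    have h3 : (∫⁻ θ in S, g θ ∂μ₂) ≤ C := by
      calc (∫⁻ θ in S, g θ ∂μ₂) ≤ ∫⁻ _ in S, M ∂μ₂ :=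
            lintegral_mono fun θ => aux_weylLocal_le_weylNorm p φ θ
        _ = M * μ₂ S := by rw [setLIntegral_const]
    exact h1.trans (add_le_add h2 h3)
  -- denominator estimate, eventually
  have hden : ∀ᶠ l : ℝ in atTop,
      (ν₂ (Set.Icc (-l) l))⁻¹ ≤ 2 * d⁻¹ * (ν₁ (Set.Icc (-l) l))⁻¹ := by
    have h2S' : (2 : ℝ≥0∞) * ν₁ S' ≠ ⊤ :=
      ENNReal.mul_ne_top (by norm_num) (hν₁.2 a' b').ne
    filter_upwards [aux_eventually_le_measure_Icc ν₁ hν₁.1 (2 * ν₁ S') h2S'] with l hl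
    set I : Set ℝ := Set.Icc (-l) l
    have hIfin : ν₁ I ≠ ⊤ := (hν₁.2 (-l) l).ne
    have hS'le : ν₁ S' ≤ ν₁ I / 2 := by
      rw [ENNReal.le_div_iff_mul_le (Or.inl (by norm_num)) (Or.inl (by norm_num)), mul_comm]
      exact hl
    have hdiff : ν₁ I / 2 ≤ ν₁ (I \ S') := by
      have : ν₁ I ≤ ν₁ (I \ S') + ν₁ S' := by
        refine le_trans (measure_mono (fun x hx => ?_)) (measure_union_le _ _)
        by_cases hxS : x ∈ S'
        · exact Set.mem_union_right _ hxS
        · exact Set.mem_union_left _ ⟨hx, hxS⟩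
      have h4 : ν₁ I - ν₁ S' ≤ ν₁ (I \ S') := tsub_le_iff_right.2 this
      refine le_trans ?_ h4
      have := ENNReal.sub_half hIfin
      calc ν₁ I / 2 = ν₁ I - ν₁ I / 2 := this.symm
        _ ≤ ν₁ I - ν₁ S' := tsub_le_tsub_left hS'le _
    have hkey : d * (ν₁ I / 2) ≤ ν₂ I := by
      have hdisj : (I \ S') ∩ S' = ∅ := Set.diff_inter_self
      have hm : MeasurableSet (I \ S') := measurableSet_Icc.diff measurableSet_Icc
      calc d * (ν₁ I / 2) ≤ d * ν₁ (I \ S') := mul_le_mul_right hdiff _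
        _ ≤ ν₂ (I \ S') := hνd _ hm hdisj
        _ ≤ ν₂ I := measure_mono Set.diff_subset
    have := ENNReal.inv_le_inv.2 hkey
    refine this.trans_eq ?_
    rw [ENNReal.mul_inv (Or.inl hd0) (Or.inl hd'),
      div_eq_mul_inv, ENNReal.mul_inv (Or.inr (by norm_num)) (Or.inr (by norm_num))]
    simp only [inv_inv]
    ring
  -- combine
  have hbound : ∀ᶠ l : ℝ in atTop,
      (ν₂ (Set.Icc (-l) l))⁻¹ * ∫⁻ θ in Set.Icc (-l) l, g θ ∂μ₂ ≤
        c * (2 * d⁻¹) *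
          ((ν₁ (Set.Icc (-l) l))⁻¹ * ∫⁻ θ in Set.Icc (-l) l, g θ ∂μ₁) +
        (ν₂ (Set.Icc (-l) l))⁻¹ * C := by
    filter_upwards [hden] with l hdl
    set I : Set ℝ := Set.Icc (-l) l
    calc (ν₂ I)⁻¹ * ∫⁻ θ in I, g θ ∂μ₂
        ≤ (ν₂ I)⁻¹ * (c * (∫⁻ θ in I, g θ ∂μ₁) + C) := mul_le_mul_right (hnum l) _
      _ = (ν₂ I)⁻¹ * (c * ∫⁻ θ in I, g θ ∂μ₁) + (ν₂ I)⁻¹ * C := by rw [mul_add]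
      _ ≤ (2 * d⁻¹ * (ν₁ I)⁻¹) * (c * ∫⁻ θ in I, g θ ∂μ₁) + (ν₂ I)⁻¹ * C :=
          add_le_add_left (mul_le_mul_left hdl _) _
      _ = c * (2 * d⁻¹) * ((ν₁ I)⁻¹ * ∫⁻ θ in I, g θ ∂μ₁) + (ν₂ I)⁻¹ * C := by ring
  -- the RHS tends to 0
  have hrhs1 : Tendsto (fun l : ℝ => c * (2 * d⁻¹) *
      ((ν₁ (Set.Icc (-l) l))⁻¹ * ∫⁻ θ in Set.Icc (-l) l, g θ ∂μ₁)) atTop (𝓝 0) := by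
    have hfin : c * (2 * d⁻¹) ≠ ⊤ :=
      ENNReal.mul_ne_top hc (ENNReal.mul_ne_top (by norm_num) (ENNReal.inv_ne_top.2 hd0))
    simpa using ENNReal.Tendsto.const_mul h (Or.inr hfin)
  have hinv : Tendsto (fun l : ℝ => (ν₂ (Set.Icc (-l) l))⁻¹) atTop (𝓝 0) := by
    rw [ENNReal.tendsto_nhds_zero]
    intro ε hε
    filter_upwards [aux_eventually_le_measure_Icc ν₂ hν₂top ε⁻¹
      (ENNReal.inv_ne_top.2 hε.ne')] with l hl
    calc (ν₂ (Set.Icc (-l) l))⁻¹ ≤ (ε⁻¹)⁻¹ := ENNReal.inv_le_inv.2 hl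
      _ = ε := inv_inv ε
  have hrhs2 : Tendsto (fun l : ℝ => (ν₂ (Set.Icc (-l) l))⁻¹ * C) atTop (𝓝 0) := by
    simpa using ENNReal.Tendsto.mul_const hinv (Or.inr hC)
  have hrhs : Tendsto (fun l : ℝ => c * (2 * d⁻¹) *
      ((ν₁ (Set.Icc (-l) l))⁻¹ * ∫⁻ θ in Set.Icc (-l) l, g θ ∂μ₁) +
      (ν₂ (Set.Icc (-l) l))⁻¹ * C) atTop (𝓝 0) := by
    simpa using hrhs1.add hrhs2
  exact tendsto_of_tendsto_of_tendsto_of_le_of_le' tendsto_const_nhds hrhs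
    (Eventually.of_forall fun l => zero_le) hbound

lemma aux_bounded_subset_Icc {A : Set ℝ} (hA : Bornology.IsBounded A) :
    ∃ r : ℝ, A ⊆ Set.Icc (-r) r := by
  obtain ⟨r, hr⟩ := hA.subset_closedBall 0
  exact ⟨r, fun x hx => by simpa [Real.closedBall_eq_Icc] using hr hx⟩

/-- `O^p` only depends on the equivalence classes of the measures. -/
theorem MemO_equiv_measures {X : Type*} [NormedAddCommGroup X] [NormedSpace ℝ X]
    [CompleteSpace X] (p : ℝ) (hp : 1 ≤ p) (μ₁ ν₁ μ₂ ν₂ : Measure ℝ)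
    (hμ₁ : MemMP μ₁) (hν₁ : MemMP ν₁) (hμ₂ : MemMP μ₂) (hν₂ : MemMP ν₂)
    (hμ : EquivMeas μ₁ μ₂) (hν : EquivMeas ν₁ ν₂)
    (hB1 : CondB1 μ₁ ν₁) (hB1' : CondB1 μ₂ ν₂) :
    ∀ φ : ℝ → X, MemO p μ₁ ν₁ φ ↔ MemO p μ₂ ν₂ φ := by
  intro φ
  obtain ⟨α, β, A, hα0, hα, hβ0, hβ, hAb, hAB⟩ := hμ
  obtain ⟨α', β', A', hα'0, hα', hβ'0, hβ', hA'b, hA'B⟩ := hν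
  obtain ⟨a, ha⟩ := aux_bounded_subset_Icc hAb
  obtain ⟨a', ha'⟩ := aux_bounded_subset_Icc hA'b
  have hABicc : ∀ B : Set ℝ, MeasurableSet B → B ∩ Set.Icc (-a) a = ∅ →
      α * μ₂ B ≤ μ₁ B ∧ μ₁ B ≤ β * μ₂ B := fun B hB hd =>
    hAB B hB (Set.eq_empty_of_subset_empty (hd ▸ Set.inter_subset_inter_right B ha))
  have hA'Bicc : ∀ B : Set ℝ, MeasurableSet B → B ∩ Set.Icc (-a') a' = ∅ →
      α' * ν₂ B ≤ ν₁ B ∧ ν₁ B ≤ β' * ν₂ B := fun B hB hd =>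
    hA'B B hB (Set.eq_empty_of_subset_empty (hd ▸ Set.inter_subset_inter_right B ha'))
  constructor
  · rintro ⟨hφB, hφT⟩
    refine ⟨hφB, ?_⟩
    refine aux_transfer p μ₁ ν₁ μ₂ ν₂ hν₁ hν₂.1 α⁻¹ (ENNReal.inv_ne_top.2 hα0.ne')
      (-a) a (fun B hB hd => ?_) (hμ₂.2 (-a) a).ne
      (β')⁻¹ (ENNReal.inv_ne_zero.2 hβ'.ne) (ENNReal.inv_ne_top.2 hβ'0.ne')
      (-a') a' (fun B hB hd => ?_) φ hφB.2.ne hφT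
    · have h := mul_le_mul_right (hABicc B hB hd).1 α⁻¹
      rwa [← mul_assoc, ENNReal.inv_mul_cancel hα0.ne' hα.ne, one_mul] at h
    · have h := mul_le_mul_right (hA'Bicc B hB hd).2 (β')⁻¹
      rwa [← mul_assoc, ENNReal.inv_mul_cancel hβ'0.ne' hβ'.ne, one_mul] at h
  · rintro ⟨hφB, hφT⟩
    refine ⟨hφB, ?_⟩
    refine aux_transfer p μ₂ ν₂ μ₁ ν₁ hν₂ hν₁.1 β hβ.ne
      (-a) a (fun B hB hd => (hABicc B hB hd).2) (hμ₁.2 (-a) a).ne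
      α' hα'0.ne' hα'.ne
      (-a') a' (fun B hB hd => (hA'Bicc B hB hd).1) φ hφB.2.ne hφT
end

section
/- Let μ ∈ M_P. Then μ satisfies condition (B_2) (for all ω ∈ ℝ there exist ρ > 0 and a bounded interval J ⊂ ℝ such that μ({a + ω : a ∈ A}) ≤ ρ μ(A) whenever A is measurable with A ∩ J = ∅) if and only if μ is equivalent to its translate μ_σ for each σ ∈ ℝ. -/
open MeasureTheory Filter Topology
open scoped ENNReal NNReal

private lemma preimage_sub_eq_image_add (σ : ℝ) (B : Set ℝ) :
    (fun t : ℝ => t - σ) ⁻¹' B = (fun a => a + σ) '' B := by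
  ext t
  simp [Set.mem_image, sub_eq_iff_eq_add', eq_comm, sub_eq_add_neg]

private lemma map_sub_apply (μ : Measure ℝ) (σ : ℝ) {B : Set ℝ} (hB : MeasurableSet B) :
    (Measure.map (fun t => t - σ) μ) B = μ ((fun a => a + σ) '' B) := by
  rw [Measure.map_apply (measurable_sub_const σ) hB, preimage_sub_eq_image_add]

private lemma meas_image_add (σ : ℝ) {B : Set ℝ} (hB : MeasurableSet B) :
    MeasurableSet ((fun a : ℝ => a + σ) '' B) := by
  rw [← preimage_sub_eq_image_add]
  exact (measurable_sub_const σ) hB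

private lemma bounded_image_sub (σ : ℝ) {J : Set ℝ} (h : Bornology.IsBounded J) :
    Bornology.IsBounded ((fun a : ℝ => a - σ) '' J) :=
  (LipschitzWith.of_dist_le_mul (K := 1)
    (fun x y => by simp [Real.dist_eq])).isBounded_image h

/-- `μ` satisfies `(B₂)` iff `μ` is equivalent to every translate `μ_σ`. -/
theorem condB2_iff_equiv_translates (μ : Measure ℝ) (hμ : MemMP μ) :
    CondB2 μ ↔ ∀ σ : ℝ, EquivMeas μ (Measure.map (fun t => t - σ) μ) := by
  constructor
  · intro h σ
    obtain ⟨ρ, J, hρ0, hρt, hJ, hJle⟩ := h σ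
    obtain ⟨ρ', J', hρ'0, hρ't, hJ', hJ'le⟩ := h (-σ)
    refine ⟨ρ⁻¹, ρ', J ∪ ((fun a => a - σ) '' J'),
      ENNReal.inv_pos.2 hρt.ne, ENNReal.inv_lt_top.2 hρ0, hρ'0, hρ't,
      hJ.union (bounded_image_sub σ hJ'), ?_⟩
    intro B hB hBA
    have hBJ : B ∩ J = ∅ := by
      rw [Set.eq_empty_iff_forall_notMem] at hBA ⊢
      intro x hx
      exact hBA x ⟨hx.1, Set.mem_union_left _ hx.2⟩
    have hB'J' : ((fun a => a + σ) '' B) ∩ J' = ∅ := by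
      rw [Set.eq_empty_iff_forall_notMem]
      rintro x ⟨⟨b, hb, rfl⟩, hxJ'⟩
      rw [Set.eq_empty_iff_forall_notMem] at hBA
      exact hBA b ⟨hb, Set.mem_union_right _ ⟨b + σ, hxJ', by ring⟩⟩
    have h1 : μ ((fun a => a + σ) '' B) ≤ ρ * μ B := hJle B hB hBJ
    have h2 : μ ((fun a => a + -σ) '' ((fun a => a + σ) '' B)) ≤
        ρ' * μ ((fun a => a + σ) '' B) := hJ'le _ (meas_image_add σ hB) hB'J'
    have himg : (fun a => a + -σ) '' ((fun a => a + σ) '' B) = B := by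
      rw [Set.image_image]
      simp
    rw [himg] at h2
    rw [map_sub_apply μ σ hB]
    constructor
    · calc ρ⁻¹ * μ ((fun a => a + σ) '' B) ≤ ρ⁻¹ * (ρ * μ B) :=
            mul_le_mul_right h1 _
        _ = μ B := by
            rw [← mul_assoc, ENNReal.inv_mul_cancel hρ0.ne' hρt.ne, one_mul]
    · exact h2
  · intro h ω
    obtain ⟨α, β, A, hα0, hαt, hβ0, hβt, hA, hle⟩ := h ω
    refine ⟨α⁻¹, A, ENNReal.inv_pos.2 hαt.ne, ENNReal.inv_lt_top.2 hα0, hA, ?_⟩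
    intro B hB hBA
    have h1 : α * (Measure.map (fun t => t - ω) μ) B ≤ μ B := (hle B hB hBA).1
    rw [map_sub_apply μ ω hB] at h1
    calc μ ((fun a => a + ω) '' B)
        = α⁻¹ * (α * μ ((fun a => a + ω) '' B)) := by
          rw [← mul_assoc, ENNReal.inv_mul_cancel hα0.ne' hαt.ne, one_mul]
      _ ≤ α⁻¹ * μ B := mul_le_mul_right h1 _
end

section
/- Let U(t,s) be an evolution family with ‖U(t,s)‖ ≤ K e^{−λ(t−s)} for t ≥ s, K ≥ 1, λ > 0, and let f : ℝ × X → X satisfy ‖f(t,x) − f(t,y)‖ ≤ L_f ‖x−y‖ and ‖f(t,x)‖ ≤ M_f(1 + ‖x‖) for all t, x, y. If K L_f / λ < 1, then the operator T defined by (T x)(t) = ∫_{−∞}^{t} U(t,s) f(s, x(s)) ds maps L^∞(ℝ, X) into itself, is a contraction with contraction constant K L_f / λ, and hence has a unique fixed point in L^∞(ℝ, X) (the unique bounded mild solution of x'(t) = A(t)x(t) + f(t, x(t))). -/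
open MeasureTheory Filter Topology

/-- Bounded measurable functions `ℝ → X` (our model of `L^∞(ℝ, X)`). -/
def BddMeas {X : Type*} [NormedAddCommGroup X] (x : ℝ → X) : Prop :=
  AEStronglyMeasurable x volume ∧ ∃ C : ℝ, ∀ t : ℝ, ‖x t‖ ≤ C

set_option linter.unusedSectionVars false
set_option linter.unusedVariables false

lemma expSplit (lam c : ℝ) : (fun u : ℝ => Real.exp (-lam * (c + u)))
    = fun u : ℝ => Real.exp (-lam * c) * Real.exp (-(lam * u)) := by
  funext u; rw [← Real.exp_add]; congr 1; ring

lemma expInt (lam c t : ℝ) (hlam : 0 < lam) :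
    IntegrableOn (fun s : ℝ => Real.exp (-lam * (c - s))) (Set.Iic t) := by
  have hG : IntegrableOn (fun u : ℝ => Real.exp (-lam * (c + u))) (Set.Ioi (-t)) := by
    rw [expSplit]
    simpa only [neg_mul, IntegrableOn] using
      (exp_neg_integrableOn_Ioi (-t) hlam).const_mul (Real.exp (-lam * c))
  have h2 : Integrable ((Set.Ioi (-t)).indicator (fun u : ℝ => Real.exp (-lam * (c + u)))) :=
    (integrable_indicator_iff measurableSet_Ioi).2 hG
  have h3 := h2.comp_neg
  have h4 : (fun s : ℝ => ((Set.Ioi (-t)).indicator (fun u : ℝ => Real.exp (-lam * (c + u)))) (-s))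
      = (Set.Iio t).indicator (fun s : ℝ => Real.exp (-lam * (c - s))) := by
    funext s
    simp only [Set.indicator, Set.mem_Ioi, Set.mem_Iio, neg_lt_neg_iff]
    rw [sub_eq_add_neg]
  rw [h4] at h3
  have h5 : IntegrableOn (fun s : ℝ => Real.exp (-lam * (c - s))) (Set.Iio t) :=
    (integrable_indicator_iff measurableSet_Iio).1 h3
  exact h5.congr_set_ae Iio_ae_eq_Iic.symm

lemma expVal (lam t : ℝ) (hlam : 0 < lam) :
    ∫ s in Set.Iic t, Real.exp (-lam * (t - s)) = 1 / lam := by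
  have h1 : ∫ s in Set.Iic t, Real.exp (-lam * (t - s))
      = ∫ s in Set.Iic t, (fun u : ℝ => Real.exp (-lam * (t + u))) (-s) := by
    refine setIntegral_congr_fun measurableSet_Iic (fun s _ => ?_)
    simp only; rw [sub_eq_add_neg]
  rw [h1, integral_comp_neg_Iic t (fun u : ℝ => Real.exp (-lam * (t + u))), expSplit,
    integral_const_mul, integral_comp_mul_left_Ioi (fun x : ℝ => Real.exp (-x)) (-t) hlam,
    integral_exp_neg_Ioi, smul_eq_mul, ← mul_assoc]
  rw [show -lam * t = -(lam * t) by ring, show -(lam * -t) = lam * t by ring, Real.exp_neg,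
    mul_right_comm, inv_mul_cancel₀ (Real.exp_ne_zero _), one_mul, one_div]

lemma clm_apply_cont {X : Type*} [NormedAddCommGroup X] [NormedSpace ℝ X] [CompleteSpace X]
    (V : ℝ → X →L[ℝ] X) (hVc : ∀ x : X, Continuous fun s => V s x) :
    Continuous fun p : ℝ × X => V p.1 p.2 := by
  rw [continuous_iff_continuousAt]
  rintro ⟨s₀, v₀⟩
  obtain ⟨C, hC⟩ : ∃ C, ∀ i : Set.Icc (s₀ - 1) (s₀ + 1), ‖V i‖ ≤ C := by
    apply banach_steinhaus
    intro x
    obtain ⟨C, hC⟩ := (isCompact_Icc (a := s₀ - 1) (b := s₀ + 1)).exists_bound_of_continuousOn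
      (hVc x).continuousOn
    exact ⟨C, fun i => hC i i.2⟩
  have hev : ∀ᶠ p : ℝ × X in 𝓝 (s₀, v₀), p.1 ∈ Set.Icc (s₀ - 1) (s₀ + 1) :=
    continuousAt_fst (Icc_mem_nhds (by linarith) (by linarith))
  have h0 : Tendsto (fun p : ℝ × X => V p.1 p.2 - V s₀ v₀) (𝓝 (s₀, v₀)) (𝓝 0) := by
    refine squeeze_zero_norm'
      (a := fun p : ℝ × X => C * ‖p.2 - v₀‖ + ‖V p.1 v₀ - V s₀ v₀‖) ?_ ?_
    · filter_upwards [hev] with p hp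
      have e1 : V p.1 p.2 - V s₀ v₀ = V p.1 (p.2 - v₀) + (V p.1 v₀ - V s₀ v₀) := by
        rw [map_sub]; abel
      rw [e1]
      refine (norm_add_le _ _).trans (add_le_add_left ?_ _)
      exact ((V p.1).le_opNorm _).trans
        (mul_le_mul_of_nonneg_right (hC ⟨p.1, hp⟩) (norm_nonneg _))
    · have t1 : Tendsto (fun p : ℝ × X => C * ‖p.2 - v₀‖) (𝓝 (s₀, v₀)) (𝓝 (C * ‖v₀ - v₀‖)) :=
        (tendsto_const_nhds.mul ((continuous_snd.sub continuous_const).norm.tendsto _))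
      have t2 : Tendsto (fun p : ℝ × X => ‖V p.1 v₀ - V s₀ v₀‖) (𝓝 (s₀, v₀))
          (𝓝 ‖V s₀ v₀ - V s₀ v₀‖) :=
        ((((hVc v₀).comp continuous_fst).sub continuous_const).norm.tendsto _)
      simpa using t1.add t2
  have := h0.add_const (V s₀ v₀)
  simpa [ContinuousAt] using this

section
variable {X : Type*} [NormedAddCommGroup X] [NormedSpace ℝ X] [CompleteSpace X]
  (U : ℝ → ℝ → X →L[ℝ] X) (K lam : ℝ)

lemma measAux (hUc : ∀ x : X, Continuous fun q : ℝ × ℝ => U q.1 q.2 x) (t : ℝ)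
    {g : ℝ → X} (hg : AEStronglyMeasurable g volume) :
    AEStronglyMeasurable (fun s => U t s (g s)) volume := by
  have h1 : Continuous fun p : ℝ × X => U t p.1 p.2 :=
    clm_apply_cont (fun s => U t s) (fun x => (hUc x).comp (Continuous.prodMk_right t))
  exact h1.comp_aestronglyMeasurable (aestronglyMeasurable_id.prodMk hg)

lemma intAux (hK : 0 ≤ K) (hlam : 0 < lam)
    (hU : ∀ t s : ℝ, s ≤ t → ‖U t s‖ ≤ K * Real.exp (-lam * (t - s)))
    (hUc : ∀ x : X, Continuous fun q : ℝ × ℝ => U q.1 q.2 x) (t : ℝ)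
    {g : ℝ → X} (hg : AEStronglyMeasurable g volume) {M : ℝ} (hM : ∀ s, ‖g s‖ ≤ M) :
    IntegrableOn (fun s => U t s (g s)) (Set.Iic t) := by
  refine Integrable.mono' (((expInt lam t t hlam).const_mul (K * M)))
    ((measAux U hUc t hg).restrict) ?_
  rw [ae_restrict_iff' measurableSet_Iic]
  refine Filter.Eventually.of_forall (fun s hs => ?_)
  calc ‖U t s (g s)‖ ≤ ‖U t s‖ * ‖g s‖ := (U t s).le_opNorm _
    _ ≤ (K * Real.exp (-lam * (t - s))) * M := by
        exact mul_le_mul (hU t s hs) (hM s) (norm_nonneg _)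
          (mul_nonneg hK (Real.exp_nonneg _))
    _ = K * M * Real.exp (-lam * (t - s)) := by ring

lemma normAux (hK : 0 ≤ K) (hlam : 0 < lam)
    (hU : ∀ t s : ℝ, s ≤ t → ‖U t s‖ ≤ K * Real.exp (-lam * (t - s)))
    (hUc : ∀ x : X, Continuous fun q : ℝ × ℝ => U q.1 q.2 x) (t : ℝ)
    {g : ℝ → X} (hg : AEStronglyMeasurable g volume) {M : ℝ} (hM : ∀ s, ‖g s‖ ≤ M) :
    ‖∫ s in Set.Iic t, U t s (g s)‖ ≤ K * M / lam := by
  have h := norm_integral_le_of_norm_le (((expInt lam t t hlam).const_mul (K * M)))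
    (by
      rw [ae_restrict_iff' measurableSet_Iic]
      refine Filter.Eventually.of_forall (fun s hs => ?_)
      calc ‖U t s (g s)‖ ≤ ‖U t s‖ * ‖g s‖ := (U t s).le_opNorm _
        _ ≤ (K * Real.exp (-lam * (t - s))) * M := by
            exact mul_le_mul (hU t s hs) (hM s) (norm_nonneg _)
              (mul_nonneg hK (Real.exp_nonneg _))
        _ = K * M * Real.exp (-lam * (t - s)) := by ring)
  calc ‖∫ s in Set.Iic t, U t s (g s)‖
      ≤ ∫ s in Set.Iic t, K * M * Real.exp (-lam * (t - s)) := h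
    _ = K * M * (1 / lam) := by rw [integral_const_mul, expVal lam t hlam]
    _ = K * M / lam := by ring

end

section
variable {X : Type*} [NormedAddCommGroup X] [NormedSpace ℝ X] [CompleteSpace X]
  (U : ℝ → ℝ → X →L[ℝ] X) (K lam : ℝ)


lemma contAux (hK : 0 ≤ K) (hlam : 0 < lam)
    (hU : ∀ t s : ℝ, s ≤ t → ‖U t s‖ ≤ K * Real.exp (-lam * (t - s)))
    (hUc : ∀ x : X, Continuous fun q : ℝ × ℝ => U q.1 q.2 x)
    {g : ℝ → X} (hg : AEStronglyMeasurable g volume) {M : ℝ}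
    (hM : ∀ s, ‖g s‖ ≤ M) (hM0 : 0 ≤ M) :
    Continuous fun t => ∫ s in Set.Iic t, U t s (g s) := by
  rw [continuous_iff_continuousAt]
  intro t₀
  set F : ℝ → ℝ → X := fun t => (Set.Iic t).indicator (fun s => U t s (g s)) with hF
  have hFint : (fun t => ∫ s in Set.Iic t, U t s (g s)) = fun t => ∫ s, F t s := by
    funext t; rw [hF]; exact (integral_indicator measurableSet_Iic).symm
  have hbnn : ∀ s : ℝ, 0 ≤ (Set.Iic (t₀ + 1)).indicator
      (fun s : ℝ => K * M * Real.exp (-lam * ((t₀ - 1) - s))) s := fun s =>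
    Set.indicator_nonneg (fun s _ => by positivity) s
  have key : Tendsto (fun t => ∫ s, F t s) (𝓝 t₀) (𝓝 (∫ s, F t₀ s)) := by
    apply tendsto_integral_filter_of_dominated_convergence
      ((Set.Iic (t₀ + 1)).indicator (fun s : ℝ => K * M * Real.exp (-lam * ((t₀ - 1) - s))))
    · exact Filter.Eventually.of_forall (fun t =>
        ((measAux U hUc t hg).indicator measurableSet_Iic))
    · have hmem : Set.Ioo (t₀ - 1) (t₀ + 1) ∈ 𝓝 t₀ := Ioo_mem_nhds (by linarith) (by linarith)
      filter_upwards [hmem] with t ht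
      refine Filter.Eventually.of_forall (fun s => ?_)
      show ‖F t s‖ ≤ (Set.Iic (t₀ + 1)).indicator
        (fun s : ℝ => K * M * Real.exp (-lam * ((t₀ - 1) - s))) s
      by_cases hs : s ≤ t
      · have e1 : F t s = U t s (g s) :=
          Set.indicator_of_mem (Set.mem_Iic.2 hs) (fun s => U t s (g s))
        have e2 : (Set.Iic (t₀ + 1)).indicator
            (fun s : ℝ => K * M * Real.exp (-lam * ((t₀ - 1) - s))) s
            = K * M * Real.exp (-lam * ((t₀ - 1) - s)) :=
          Set.indicator_of_mem (Set.mem_Iic.2 (le_trans hs (le_of_lt ht.2)))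
            (fun s : ℝ => K * M * Real.exp (-lam * ((t₀ - 1) - s)))
        rw [e1, e2]
        calc ‖U t s (g s)‖ ≤ ‖U t s‖ * ‖g s‖ := (U t s).le_opNorm _
          _ ≤ (K * Real.exp (-lam * (t - s))) * M :=
              mul_le_mul (hU t s hs) (hM s) (norm_nonneg _) (mul_nonneg hK (Real.exp_nonneg _))
          _ ≤ (K * Real.exp (-lam * ((t₀ - 1) - s))) * M := by
              have he : Real.exp (-lam * (t - s)) ≤ Real.exp (-lam * ((t₀ - 1) - s)) :=
                Real.exp_le_exp.2 (by nlinarith [ht.1])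
              exact mul_le_mul_of_nonneg_right (mul_le_mul_of_nonneg_left he hK) hM0
          _ = K * M * Real.exp (-lam * ((t₀ - 1) - s)) := by ring
      · have e1 : F t s = 0 :=
          Set.indicator_of_notMem (fun h => hs (Set.mem_Iic.1 h)) (fun s => U t s (g s))
        rw [e1]
        simpa using hbnn s
    · rw [integrable_indicator_iff measurableSet_Iic]
      exact (expInt lam (t₀ - 1) (t₀ + 1) hlam).const_mul (K * M)
    · have hae : ∀ᵐ s : ℝ, s ≠ t₀ := by
        rw [ae_iff]
        simpa [Set.setOf_eq_eq_singleton, not_not] using measure_singleton (α := ℝ) t₀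
      filter_upwards [hae] with s hs
      show Filter.Tendsto (fun t => F t s) (𝓝 t₀) (𝓝 (F t₀ s))
      rcases lt_or_gt_of_ne hs with h | h
      · have hcont : Tendsto (fun t => U t s (g s)) (𝓝 t₀) (𝓝 (U t₀ s (g s))) :=
          (((hUc (g s)).comp (continuous_id.prodMk continuous_const)).tendsto t₀)
        have hF0 : F t₀ s = U t₀ s (g s) :=
          Set.indicator_of_mem (Set.mem_Iic.2 (le_of_lt h)) (fun s => U t₀ s (g s))
        rw [hF0]
        refine hcont.congr' ?_
        filter_upwards [Ioi_mem_nhds h] with t ht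
        exact (Set.indicator_of_mem (Set.mem_Iic.2 (le_of_lt ht))
          (fun s => U t s (g s))).symm
      · have hev : ∀ᶠ t in 𝓝 t₀, F t s = F t₀ s := by
          filter_upwards [Iio_mem_nhds h] with t ht
          have z1 : F t s = 0 := Set.indicator_of_notMem
            (fun hm => absurd (Set.mem_Iic.1 hm) (not_le.2 ht)) (fun s => U t s (g s))
          have z2 : F t₀ s = 0 := Set.indicator_of_notMem
            (fun hm => absurd (Set.mem_Iic.1 hm) (not_le.2 h)) (fun s => U t₀ s (g s))
          rw [z1, z2]
        exact tendsto_const_nhds.congr'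
          (by filter_upwards [hev] with t ht; rw [ht])
  rw [hFint]
  exact key

end

/-- the integral operator `(T x)(t) = ∫_{-∞}^t U(t,s) f(s, x(s)) ds`
maps `L^∞(ℝ, X)` into itself, is a contraction with constant `K L_f / λ`, and has a
unique fixed point in `L^∞(ℝ, X)` — the unique bounded mild solution of
`x' = A(t)x + f(t,x)`. -/
theorem contraction_unique_bounded_mild_solution {X : Type*} [NormedAddCommGroup X]
    [NormedSpace ℝ X] [CompleteSpace X]
    (U : ℝ → ℝ → X →L[ℝ] X) (f : ℝ → X → X) (K lam Lf Mf : ℝ)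
    (hK : 1 ≤ K) (hlam : 0 < lam) (hLf : 0 < Lf) (hMf : 0 < Mf)
    (hU : ∀ t s : ℝ, s ≤ t → ‖U t s‖ ≤ K * Real.exp (-lam * (t - s)))
    (hUc : ∀ x : X, Continuous fun q : ℝ × ℝ => U q.1 q.2 x)
    (hfm : ∀ x : ℝ → X, AEStronglyMeasurable x volume →
      AEStronglyMeasurable (fun s => f s (x s)) volume)
    (hLip : ∀ (t : ℝ) (x y : X), ‖f t x - f t y‖ ≤ Lf * ‖x - y‖)
    (hGrow : ∀ (t : ℝ) (x : X), ‖f t x‖ ≤ Mf * (1 + ‖x‖))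
    (hΘ : K * Lf / lam < 1) :
    (∀ x : ℝ → X, BddMeas x →
      BddMeas (fun t => ∫ s in Set.Iic t, U t s (f s (x s)))) ∧
    (∀ x y : ℝ → X, BddMeas x → BddMeas y → ∀ C : ℝ, (∀ t, ‖x t - y t‖ ≤ C) →
      ∀ t : ℝ, ‖(∫ s in Set.Iic t, U t s (f s (x s))) -
          ∫ s in Set.Iic t, U t s (f s (y s))‖ ≤ (K * Lf / lam) * C) ∧
    (∃! x : ℝ → X, BddMeas x ∧ ∀ t : ℝ, x t = ∫ s in Set.Iic t, U t s (f s (x s))) := by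
  have hK0 : (0:ℝ) ≤ K := le_trans zero_le_one hK
  have hθ0 : (0:ℝ) ≤ K * Lf / lam := by positivity
  -- growth bound for bounded functions
  have grow : ∀ (x : ℝ → X) (C : ℝ), (∀ t, ‖x t‖ ≤ C) →
      ∀ s, ‖f s (x s)‖ ≤ Mf * (1 + C) := by
    intro x C hC s
    exact (hGrow s (x s)).trans
      (mul_le_mul_of_nonneg_left (by linarith [hC s]) hMf.le)
  have growNN : ∀ (x : ℝ → X) (C : ℝ), (∀ t, ‖x t‖ ≤ C) → 0 ≤ Mf * (1 + C) := by
    intro x C hC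
    have : (0:ℝ) ≤ C := (norm_nonneg _).trans (hC 0)
    positivity
  -- Part 1
  have part1 : ∀ x : ℝ → X, BddMeas x →
      BddMeas (fun t => ∫ s in Set.Iic t, U t s (f s (x s))) := by
    rintro x ⟨hxm, C, hC⟩
    have hgm := hfm x hxm
    refine ⟨(contAux U K lam hK0 hlam hU hUc hgm (grow x C hC)
      (growNN x C hC)).aestronglyMeasurable, K * (Mf * (1 + C)) / lam, fun t =>
      normAux U K lam hK0 hlam hU hUc t hgm (grow x C hC)⟩
  -- Part 2
  have part2 : ∀ x y : ℝ → X, BddMeas x → BddMeas y → ∀ C : ℝ, (∀ t, ‖x t - y t‖ ≤ C) →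
      ∀ t : ℝ, ‖(∫ s in Set.Iic t, U t s (f s (x s))) -
          ∫ s in Set.Iic t, U t s (f s (y s))‖ ≤ (K * Lf / lam) * C := by
    rintro x y ⟨hxm, Cx, hCx⟩ ⟨hym, Cy, hCy⟩ C hC t
    have hxi := intAux U K lam hK0 hlam hU hUc t (hfm x hxm) (grow x Cx hCx)
    have hyi := intAux U K lam hK0 hlam hU hUc t (hfm y hym) (grow y Cy hCy)
    rw [← integral_sub hxi hyi]
    have hfun : (fun s => U t s (f s (x s)) - U t s (f s (y s)))
        = fun s => U t s (f s (x s) - f s (y s)) := by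
      funext s; rw [map_sub]
    rw [show (∫ s in Set.Iic t, (U t s (f s (x s)) - U t s (f s (y s))))
        = ∫ s in Set.Iic t, U t s (f s (x s) - f s (y s)) by rw [hfun]]
    have hb : ∀ᵐ s ∂(volume.restrict (Set.Iic t)),
        ‖U t s (f s (x s) - f s (y s))‖ ≤ K * (Lf * C) * Real.exp (-lam * (t - s)) := by
      rw [ae_restrict_iff' measurableSet_Iic]
      refine Filter.Eventually.of_forall (fun s hs => ?_)
      calc ‖U t s (f s (x s) - f s (y s))‖ ≤ ‖U t s‖ * ‖f s (x s) - f s (y s)‖ :=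
            (U t s).le_opNorm _
        _ ≤ (K * Real.exp (-lam * (t - s))) * (Lf * C) := by
            refine mul_le_mul (hU t s hs) ((hLip s (x s) (y s)).trans
              (mul_le_mul_of_nonneg_left (hC s) hLf.le)) (norm_nonneg _)
              (mul_nonneg hK0 (Real.exp_nonneg _))
        _ = K * (Lf * C) * Real.exp (-lam * (t - s)) := by ring
    calc ‖∫ s in Set.Iic t, U t s (f s (x s) - f s (y s))‖
        ≤ ∫ s in Set.Iic t, K * (Lf * C) * Real.exp (-lam * (t - s)) :=
          norm_integral_le_of_norm_le ((expInt lam t t hlam).const_mul _) hb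
      _ = K * (Lf * C) * (1 / lam) := by rw [integral_const_mul, expVal lam t hlam]
      _ = (K * Lf / lam) * C := by ring
  refine ⟨part1, part2, ?_⟩
  -- uniqueness among BddMeas fixed points
  have uniq : ∀ x y : ℝ → X, BddMeas x → BddMeas y →
      (∀ t, x t = ∫ s in Set.Iic t, U t s (f s (x s))) →
      (∀ t, y t = ∫ s in Set.Iic t, U t s (f s (y s))) → x = y := by
    intro x y hx hy hfx hfy
    obtain ⟨_, Cx, hCx⟩ := id hx; obtain ⟨_, Cy, hCy⟩ := id hy
    have hbase : ∀ t, ‖x t - y t‖ ≤ Cx + Cy := fun t =>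
      (norm_sub_le _ _).trans (add_le_add (hCx t) (hCy t))
    have hiter : ∀ n : ℕ, ∀ t, ‖x t - y t‖ ≤ (K * Lf / lam) ^ n * (Cx + Cy) := by
      intro n; induction n with
      | zero => simpa using hbase
      | succ n ih =>
        intro t
        have h2 := part2 x y hx hy ((K * Lf / lam) ^ n * (Cx + Cy)) ih t
        rw [hfx t, hfy t]
        calc ‖(∫ s in Set.Iic t, U t s (f s (x s))) -
              ∫ s in Set.Iic t, U t s (f s (y s))‖
            ≤ (K * Lf / lam) * ((K * Lf / lam) ^ n * (Cx + Cy)) := h2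
          _ = (K * Lf / lam) ^ (n + 1) * (Cx + Cy) := by ring
    funext t
    have h0 : Filter.Tendsto (fun n : ℕ => (K * Lf / lam) ^ n * (Cx + Cy)) atTop (𝓝 0) := by
      simpa using (tendsto_pow_atTop_nhds_zero_of_lt_one hθ0 hΘ).mul_const (Cx + Cy)
    have hle : ‖x t - y t‖ ≤ 0 := ge_of_tendsto' h0 (fun n => hiter n t)
    exact sub_eq_zero.1 (norm_eq_zero.1 (le_antisymm hle (norm_nonneg _)))
  -- existence via Banach fixed point on bounded continuous functions
  have bddOf : ∀ z : BoundedContinuousFunction ℝ X, BddMeas ⇑z := fun z =>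
    ⟨z.continuous.aestronglyMeasurable, ‖z‖, fun t => z.norm_coe_le_norm t⟩
  let Φ : BoundedContinuousFunction ℝ X → BoundedContinuousFunction ℝ X := fun z =>
    BoundedContinuousFunction.ofNormedAddCommGroup
      (fun t => ∫ s in Set.Iic t, U t s (f s (z s)))
      (contAux U K lam hK0 hlam hU hUc (hfm _ z.continuous.aestronglyMeasurable)
        (grow ⇑z ‖z‖ (fun t => z.norm_coe_le_norm t))
        (growNN ⇑z ‖z‖ (fun t => z.norm_coe_le_norm t)))
      (K * (Mf * (1 + ‖z‖)) / lam)
      (fun t => normAux U K lam hK0 hlam hU hUc t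
        (hfm _ z.continuous.aestronglyMeasurable)
        (grow ⇑z ‖z‖ (fun t => z.norm_coe_le_norm t)))
  have hΦapp : ∀ (z : BoundedContinuousFunction ℝ X) (t : ℝ),
      (Φ z) t = ∫ s in Set.Iic t, U t s (f s (z s)) := fun z t => rfl
  have hlip : LipschitzWith ⟨K * Lf / lam, hθ0⟩ Φ := by
    apply LipschitzWith.of_dist_le_mul
    intro z w
    show dist (Φ z) (Φ w) ≤ K * Lf / lam * dist z w
    rw [BoundedContinuousFunction.dist_le (mul_nonneg hθ0 dist_nonneg)]
    intro t
    rw [dist_eq_norm, hΦapp z t, hΦapp w t]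
    exact part2 ⇑z ⇑w (bddOf z) (bddOf w) (dist z w)
      (fun u => by rw [← dist_eq_norm]; exact BoundedContinuousFunction.dist_coe_le_dist u) t
  have hcontr : ContractingWith ⟨K * Lf / lam, hθ0⟩ Φ := by
    refine ⟨?_, hlip⟩
    refine (NNReal.coe_lt_coe (r₁ := ⟨K * Lf / lam, hθ0⟩) (r₂ := 1)).1 ?_
    exact hΘ
  haveI : Nonempty (BoundedContinuousFunction ℝ X) := ⟨0⟩
  let xstar : BoundedContinuousFunction ℝ X := ContractingWith.fixedPoint Φ hcontr
  have hfix : Φ xstar = xstar := hcontr.fixedPoint_isFixedPt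
  have hfixt : ∀ t : ℝ, (⇑xstar) t = ∫ s in Set.Iic t, U t s (f s (xstar s)) := by
    intro t
    conv_lhs => rw [← hfix]
    exact hΦapp xstar t
  refine ⟨⇑xstar, ⟨bddOf xstar, hfixt⟩, ?_⟩
  intro y hy
  exact uniq y ⇑xstar hy.1 (bddOf xstar) hy.2 hfixt
end
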